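/- arXiv:1707.06771 — 2 statements merged into one kernel-verified Lean document; each statement's English description precedes it below -/
import Mathlib

section
/- For every positive integer n, real x > -1, and complex z with |z| < 1 + x, we have B(n, 1+x-z)/B(n, 1+x) = exp( Σ_{k=1}^∞ (z^k/k) · H_n^{(k)}(x) ), where H_n^{(k)}(x) = Σ_{j=1}^n 1/(j+x)^k. -/
/-- The Euler beta function `B(a,b) = Γ(a)Γ(b)/Γ(a+b)` (complex arguments). -/
noncomputable def eulerBeta (a b : ℂ) : ℂ :=
  Complex.Gamma a * Complex.Gamma b / Complex.Gamma (a + b)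

/-- Generalized harmonic number `H_n^{(k)}(x) = ∑_{j=1}^n 1/(j+x)^k`. -/
noncomputable def genHarmonic (n k : ℕ) (x : ℝ) : ℂ :=
  ∑ j ∈ Finset.Icc 1 n, 1 / ((j : ℂ) + x) ^ k

lemma gamma_add_nat {s : ℂ} (hs : 0 < s.re) (n : ℕ) :
    Complex.Gamma (s + n) = (∏ j ∈ Finset.range n, (s + j)) * Complex.Gamma s := by
  induction n with
  | zero => simp
  | succ m ih =>
    have hne : s + m ≠ 0 := by
      intro h
      have : (s + m).re = 0 := by rw [h]; simp
      simp only [Complex.add_re, Complex.natCast_re] at this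
      have : (0 : ℝ) ≤ m := Nat.cast_nonneg m
      linarith [Complex.add_re s m ▸ (by simp [Complex.natCast_re] :
        (s + (m : ℂ)).re = s.re + m)]
    have : s + (m + 1 : ℕ) = (s + m) + 1 := by push_cast; ring
    rw [this, Complex.Gamma_add_one _ hne, ih, Finset.prod_range_succ]
    ring

theorem beta_ratio_eq_exp (n : ℕ) (hn : 0 < n) (x : ℝ) (hx : -1 < x)
    (z : ℂ) (hz : ‖z‖ < 1 + x) :
    eulerBeta (n : ℂ) (1 + x - z) / eulerBeta (n : ℂ) (1 + x) =
      Complex.exp (∑' k : ℕ, z ^ (k + 1) / (k + 1) * genHarmonic n (k + 1) x) := by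
  set a : ℂ := 1 + x - z with ha_def
  set b : ℂ := 1 + (x : ℂ) with hb_def
  have hxpos : (0 : ℝ) < 1 + x := by linarith
  have ha_re : 0 < a.re := by
    have hzre : z.re ≤ ‖z‖ := Complex.re_le_norm z
    simp only [ha_def, hb_def, Complex.sub_re, Complex.add_re, Complex.one_re,
      Complex.ofReal_re]
    linarith
  have hb_re : 0 < b.re := by
    simp only [hb_def, Complex.add_re, Complex.one_re, Complex.ofReal_re]; linarith
  -- key facts for each j
  have hjx : ∀ j ∈ Finset.Icc 1 n, (0 : ℝ) < j + x := by
    intro j hj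
    have : 1 ≤ j := (Finset.mem_Icc.mp hj).1
    have : (1 : ℝ) ≤ j := by exact_mod_cast this
    linarith
  have hjxne : ∀ j ∈ Finset.Icc 1 n, ((j : ℂ) + x) ≠ 0 := by
    intro j hj
    have := hjx j hj
    intro h
    have : ((j : ℂ) + x).re = 0 := by rw [h]; simp
    simp only [Complex.add_re, Complex.natCast_re, Complex.ofReal_re] at this
    linarith [hjx j hj]
  have hwlt : ∀ j ∈ Finset.Icc 1 n, ‖z / ((j : ℂ) + x)‖ < 1 := by
    intro j hj
    have h1 : ((j : ℂ) + x) = ((j + x : ℝ) : ℂ) := by push_cast; ring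
    rw [norm_div, h1, Complex.norm_real, Real.norm_of_nonneg (hjx j hj).le,
      div_lt_one (hjx j hj)]
    have : (1 : ℝ) ≤ j := by exact_mod_cast (Finset.mem_Icc.mp hj).1
    calc ‖z‖ < 1 + x := hz
      _ ≤ j + x := by linarith
  have hsub_ne : ∀ j ∈ Finset.Icc 1 n, (1 : ℂ) - z / ((j : ℂ) + x) ≠ 0 := by
    intro j hj
    intro h
    have := hwlt j hj
    rw [sub_eq_zero] at h
    rw [← h] at this
    simp at this
  -- the common product
  set P : ℂ := ∏ j ∈ Finset.Icc 1 n, ((j : ℂ) + x) / ((j : ℂ) + x - z) with hP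
  -- RHS = P
  have hRHS : Complex.exp (∑' k : ℕ, z ^ (k + 1) / (k + 1) * genHarmonic n (k + 1) x) = P := by
    have hsum : ∀ j ∈ Finset.Icc 1 n,
        HasSum (fun k : ℕ => (z / ((j : ℂ) + x)) ^ (k + 1) / (k + 1))
          (-Complex.log (1 - z / ((j : ℂ) + x))) := by
      intro j hj
      have h0 := Complex.hasSum_taylorSeries_neg_log (hwlt j hj)
      have := (hasSum_nat_add_iff' (f := fun k : ℕ => (z / ((j : ℂ) + x)) ^ k / k) 1).mpr h0
      simpa using this
    have hterm : ∀ k : ℕ, z ^ (k + 1) / (k + 1) * genHarmonic n (k + 1) x =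
        ∑ j ∈ Finset.Icc 1 n, (z / ((j : ℂ) + x)) ^ (k + 1) / (k + 1) := by
      intro k
      rw [genHarmonic, Finset.mul_sum]
      refine Finset.sum_congr rfl fun j hj => ?_
      rw [div_pow]
      field_simp
    have htot : HasSum (fun k : ℕ => z ^ (k + 1) / (k + 1) * genHarmonic n (k + 1) x)
        (∑ j ∈ Finset.Icc 1 n, -Complex.log (1 - z / ((j : ℂ) + x))) := by
      have := hasSum_sum (f := fun (j : ℕ) (k : ℕ) => (z / ((j : ℂ) + x)) ^ (k + 1) / (k + 1))
        (s := Finset.Icc 1 n) hsum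
      simpa only [← hterm] using this
    rw [htot.tsum_eq, Complex.exp_sum, hP]
    refine Finset.prod_congr rfl fun j hj => ?_
    rw [Complex.exp_neg, Complex.exp_log (hsub_ne j hj)]
    have key : (1 : ℂ) - z / ((j:ℂ)+x) = ((j:ℂ) + x - z) / ((j:ℂ)+x) := by
      field_simp [hjxne j hj]
    rw [key, inv_div]
  -- LHS = P
  have hGn : Complex.Gamma (n : ℂ) ≠ 0 :=
    Complex.Gamma_ne_zero_of_re_pos (by simp [Complex.natCast_re]; exact_mod_cast hn)
  have hGa : Complex.Gamma a ≠ 0 := Complex.Gamma_ne_zero_of_re_pos ha_re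
  have hGb : Complex.Gamma b ≠ 0 := Complex.Gamma_ne_zero_of_re_pos hb_re
  have hPa_ne : ∀ j ∈ Finset.range n, a + j ≠ 0 := by
    intro j hj h
    have : (a + j).re = 0 := by rw [h]; simp
    simp only [Complex.add_re, Complex.natCast_re] at this
    have : (0:ℝ) ≤ j := Nat.cast_nonneg j
    linarith [ha_re, (by simp [Complex.add_re, Complex.natCast_re] :
      (a + (j:ℂ)).re = a.re + j)]
  have hPb_ne : ∀ j ∈ Finset.range n, b + j ≠ 0 := by
    intro j hj h
    have : (0:ℝ) ≤ j := Nat.cast_nonneg j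
    have h2 : (b + (j:ℂ)).re = b.re + j := by simp [Complex.add_re, Complex.natCast_re]
    rw [h] at h2; simp at h2
    linarith [hb_re]
  have hGan : Complex.Gamma ((n : ℂ) + a) =
      (∏ j ∈ Finset.range n, (a + j)) * Complex.Gamma a := by
    rw [add_comm]; exact gamma_add_nat ha_re n
  have hGbn : Complex.Gamma ((n : ℂ) + b) =
      (∏ j ∈ Finset.range n, (b + j)) * Complex.Gamma b := by
    rw [add_comm]; exact gamma_add_nat hb_re n
  have hPa : (∏ j ∈ Finset.range n, (a + j)) ≠ 0 := Finset.prod_ne_zero_iff.mpr hPa_ne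
  have hPb : (∏ j ∈ Finset.range n, (b + j)) ≠ 0 := Finset.prod_ne_zero_iff.mpr hPb_ne
  have hLHS : eulerBeta (n : ℂ) a / eulerBeta (n : ℂ) b = P := by
    have hprod : P = (∏ j ∈ Finset.range n, (b + j)) / (∏ j ∈ Finset.range n, (a + j)) := by
      rw [hP, ← Finset.prod_div_distrib, ← Finset.Ico_add_one_right_eq_Icc,
        Finset.prod_Ico_eq_prod_range]
      simp only [Nat.add_sub_cancel]
      refine Finset.prod_congr rfl fun i hi => ?_
      have h1 : ((1 + i : ℕ) : ℂ) + x = b + i := by rw [hb_def]; push_cast; ring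
      have h2 : b + (i : ℂ) - z = a + i := by rw [ha_def]; ring
      rw [h1, h2]
    rw [hprod, eulerBeta, eulerBeta, hGan, hGbn]
    field_simp
  rw [hLHS, hRHS]
end

section
/- For a complex number s with Re(s) > 0, a positive integer n, and a real x > -1, one has (1/Γ(s)) ∫_0^∞ ((1-e^{-t})^n / (e^t - 1)) e^{-xt} t^{s-1} dt = Σ_{k=0}^{n-1} (-1)^k C(n-1,k) (x+k+1)^{-s}. -/
open MeasureTheory Set Complex

lemma aux_integrable (s : ℂ) (hs : 0 < s.re) {r : ℝ} (hr : 0 < r) :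
    IntegrableOn (fun t : ℝ => (t : ℂ) ^ (s - 1) * Complex.exp (-(r * t))) (Ioi 0) := by
  have h1 : IntegrableOn (fun u : ℝ => (u : ℂ) ^ (s - 1) * Complex.exp (-u)) (Ioi 0) := by
    refine (Complex.GammaIntegral_convergent hs).congr_fun (fun u hu => ?_) measurableSet_Ioi
    beta_reduce
    rw [ofReal_exp, ofReal_neg, mul_comm]
  have h2 : IntegrableOn (fun t : ℝ => ((r * t : ℝ) : ℂ) ^ (s - 1) *
      Complex.exp (-((r * t : ℝ) : ℂ))) (Ioi 0) := by
    have := (integrableOn_Ioi_comp_mul_left_iff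
      (fun u : ℝ => (u : ℂ) ^ (s - 1) * Complex.exp (-u)) 0 hr).mpr
    rw [mul_zero] at this
    exact this h1
  have hrc : ((r : ℂ)) ^ (s - 1) ≠ 0 := by
    simp [Complex.cpow_eq_zero_iff, Complex.ofReal_ne_zero, hr.ne']
  have h3 : IntegrableOn (fun t : ℝ => (((r : ℂ)) ^ (s - 1))⁻¹ *
      (((r * t : ℝ) : ℂ) ^ (s - 1) * Complex.exp (-((r * t : ℝ) : ℂ)))) (Ioi 0) :=
    h2.const_mul _
  refine h3.congr_fun (fun t ht => ?_) measurableSet_Ioi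
  rw [mem_Ioi] at ht
  beta_reduce
  rw [ofReal_mul, mul_cpow_ofReal_nonneg hr.le ht.le]
  push_cast [mul_comm]
  field_simp

theorem D_transform_eq_sum (s : ℂ) (hs : 0 < s.re) (n : ℕ) (hn : 0 < n)
    (x : ℝ) (hx : -1 < x) :
    (1 / Complex.Gamma s) *
        ∫ t in Set.Ioi (0 : ℝ),
          ((1 - Complex.exp (-(t : ℂ))) ^ n / (Complex.exp (t : ℂ) - 1)) *
            Complex.exp (-(x : ℂ) * t) * (t : ℂ) ^ (s - 1) =
      ∑ k ∈ Finset.range n, (-1) ^ k * (Nat.choose (n - 1) k : ℂ) *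
        ((x : ℂ) + k + 1) ^ (-s) := by
  obtain ⟨m, rfl⟩ : ∃ m, n = m + 1 := ⟨n - 1, (Nat.succ_pred_eq_of_pos hn).symm⟩
  have hpt : ∀ t ∈ Ioi (0 : ℝ),
      ((1 - Complex.exp (-(t : ℂ))) ^ (m + 1) / (Complex.exp (t : ℂ) - 1)) *
          Complex.exp (-(x : ℂ) * t) * (t : ℂ) ^ (s - 1) =
        ∑ k ∈ Finset.range (m + 1), ((-1) ^ k * ((m.choose k : ℕ) : ℂ)) *
          ((t : ℂ) ^ (s - 1) * Complex.exp (-(((x + k + 1 : ℝ)) * t))) := by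
    intro t ht
    rw [mem_Ioi] at ht
    have hexp : Complex.exp (t : ℂ) - 1 ≠ 0 := by
      rw [sub_ne_zero, ← Complex.ofReal_exp]
      have h1 : (1 : ℝ) < Real.exp t := by
        rw [← Real.exp_zero]; exact Real.exp_lt_exp.mpr ht
      exact_mod_cast h1.ne'
    have hfac : Complex.exp (t : ℂ) - 1 = Complex.exp (t : ℂ) * (1 - Complex.exp (-(t : ℂ))) := by
      rw [mul_sub, mul_one, ← Complex.exp_add, add_neg_cancel, Complex.exp_zero]
    have hexpt : Complex.exp (t : ℂ) ≠ 0 := Complex.exp_ne_zero _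
    have hne : (1 : ℂ) - Complex.exp (-(t : ℂ)) ≠ 0 := by
      intro h
      rw [hfac, h, mul_zero] at hexp
      exact hexp rfl
    have key : (1 - Complex.exp (-(t : ℂ))) ^ (m + 1) / (Complex.exp (t : ℂ) - 1) =
        (1 - Complex.exp (-(t : ℂ))) ^ m * Complex.exp (-(t : ℂ)) := by
      rw [hfac, pow_succ]
      field_simp [Complex.exp_neg]
      ring
      rw [← Complex.exp_add, neg_add_cancel, Complex.exp_zero]
    rw [key]
    have hbin : (1 - Complex.exp (-(t : ℂ))) ^ m =
        ∑ k ∈ Finset.range (m + 1), ((-1) ^ k * ((m.choose k : ℕ) : ℂ)) *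
          Complex.exp (-(t : ℂ)) ^ k := by
      rw [sub_eq_add_neg, add_comm, add_pow]
      refine Finset.sum_congr rfl fun k hk => ?_
      rw [neg_pow]
      ring
    rw [hbin, Finset.sum_mul, Finset.sum_mul, Finset.sum_mul]
    refine Finset.sum_congr rfl fun k hk => ?_
    rw [← Complex.exp_nat_mul]
    rw [show (-(((x + k + 1 : ℝ)) * t) : ℂ) = (k : ℂ) * (-(t : ℂ)) + -(t : ℂ) + (-(x : ℂ) * t) by
      push_cast; ring]
    rw [Complex.exp_add, Complex.exp_add]
    ring
  rw [setIntegral_congr_fun measurableSet_Ioi hpt]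
  have hint : ∀ k ∈ Finset.range (m + 1), IntegrableOn
      (fun t : ℝ => ((-1 : ℂ) ^ k * ((m.choose k : ℕ) : ℂ)) *
        ((t : ℂ) ^ (s - 1) * Complex.exp (-(((x + k + 1 : ℝ)) * t)))) (Ioi 0) := by
    intro k _
    have hk0 : (0:ℝ) ≤ (k:ℝ) := Nat.cast_nonneg k
    exact (aux_integrable s hs (by linarith : (0:ℝ) < x + k + 1)).const_mul _
  rw [integral_finset_sum _ hint, Finset.mul_sum]
  refine Finset.sum_congr rfl fun k hk => ?_
  have hk0 : (0:ℝ) ≤ (k:ℝ) := Nat.cast_nonneg k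
  have hr' : (0:ℝ) < x + k + 1 := by linarith
  rw [MeasureTheory.integral_const_mul, Complex.integral_cpow_mul_exp_neg_mul_Ioi hs hr']
  have hΓ : Complex.Gamma s ≠ 0 := Complex.Gamma_ne_zero_of_re_pos hs
  have harg : ((x + k + 1 : ℝ) : ℂ) = (x : ℂ) + k + 1 := by push_cast; ring
  have hpow : (1 / ((x + k + 1 : ℝ) : ℂ)) ^ s = ((x : ℂ) + k + 1) ^ (-s) := by
    rw [one_div, Complex.inv_cpow _ _ (by
      rw [Complex.arg_ofReal_of_nonneg hr'.le]; exact (Real.pi_ne_zero).symm),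
      ← Complex.cpow_neg, harg]
  rw [hpow]
  simp only [Nat.add_sub_cancel]
  field_simp
end
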